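/- In a non-competitive CRN, if a → b via line-segment reachability and b is static, then a does not have unbounded potential: there is no infinite sequence a →¹_{u₁} a₁ →¹_{u₂} a₂ →¹ ⋯ and reaction R with Σ_{i=1}^∞ u_i(R) = ∞. -/

import Mathlib

/-- A chemical reaction network: reactant and product stoichiometries per reaction. -/
structure CRN (S R : Type) where
  reactants : R → S → ℕ
  products : R → S → ℕ

namespace CRN

variable {S R : Type} [Fintype S] [Fintype R]

/-- Net change of species `s` by one unit of reaction `r`. -/
def net (C : CRN S R) (r : R) (s : S) : ℝ :=
  (C.products r s : ℝ) - (C.reactants r s : ℝ)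

/-- A flux vector `u` is applicable at state `a` if it is nonnegative and every
reaction with positive flux has all its reactants positive in `a`. -/
def Applicable (C : CRN S R) (u : R → ℝ) (a : S → ℝ) : Prop :=
  (∀ r, 0 ≤ u r) ∧ ∀ r, 0 < u r → ∀ s, 0 < C.reactants r s → 0 < a s

/-- Straight-line reachability via a given flux vector: `b = M u + a`,
with `u` applicable at `a` and `b` a valid (nonnegative) state. -/
def StepWith (C : CRN S R) (u : R → ℝ) (a b : S → ℝ) : Prop :=
  C.Applicable u a ∧ (∀ s, 0 ≤ b s) ∧ ∀ s, b s = a s + ∑ r, u r * C.net r s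

/-- Straight-line reachability. -/
def Step (C : CRN S R) (a b : S → ℝ) : Prop := ∃ u, C.StepWith u a b

/-- Line-segment reachability: reflexive transitive closure of straight-line steps. -/
def Reach (C : CRN S R) : (S → ℝ) → (S → ℝ) → Prop := Relation.ReflTransGen C.Step

/-- A state is static if only the zero flux vector is applicable at it. -/
def Static (C : CRN S R) (b : S → ℝ) : Prop :=
  ∀ u, C.Applicable u b → u = 0

/-- Non-competitive: every species strictly decreased by some reaction is a
reactant in only that reaction. -/
def NonCompetitive (C : CRN S R) : Prop :=
  ∀ r s, C.products r s < C.reactants r s → ∀ r', 0 < C.reactants r' s → r' = r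

/-- A finite line-segment path of length `n`. -/
structure FinPath (C : CRN S R) (n : ℕ) where
  states : Fin (n+1) → S → ℝ
  flux : Fin n → R → ℝ
  valid : ∀ i : Fin n, C.StepWith (flux i) (states i.castSucc) (states i.succ)

end CRN

/-- An infinite line-segment path. -/
structure CRN.InfPath {S R : Type} [Fintype S] [Fintype R] (C : CRN S R) where
  states : ℕ → S → ℝ
  flux : ℕ → R → ℝ
  valid : ∀ i : ℕ, C.StepWith (flux i) (states i) (states (i + 1))

/-- In a non-competitive CRN, if `a` line-segment reaches a static state `b`,
then `a` does not have unbounded potential: there is no infinite path from `a`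
along which the cumulative flux of some reaction diverges. -/
lemma reach_total_flux {S R : Type} [Fintype S] [Fintype R]
    (C : CRN S R) {a b : S → ℝ} (hab : C.Reach a b) :
    ∃ T : R → ℝ, (∀ r, 0 ≤ T r) ∧ ∀ s, b s = a s + ∑ r, T r * C.net r s := by
  induction hab with
  | refl => exact ⟨fun _ => 0, fun _ => le_refl 0, by intro s; simp⟩
  | @tail x y hax hxy ih =>
    obtain ⟨T, hT0, hT⟩ := ih
    obtain ⟨u, hu⟩ := hxy
    refine ⟨fun r => T r + u r, fun r => add_nonneg (hT0 r) (hu.1.1 r), ?_⟩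
    intro s
    rw [hu.2.2 s, hT s]
    have : ∑ r, (T r + u r) * C.net r s
        = ∑ r, (T r * C.net r s + u r * C.net r s) := by
      apply Finset.sum_congr rfl; intro r _; ring
    rw [this, Finset.sum_add_distrib]; ring

theorem stmt6 {S R : Type} [Fintype S] [Fintype R]
    (C : CRN S R) (hnc : C.NonCompetitive) (a b : S → ℝ)
    (hab : C.Reach a b) (hb : C.Static b) :
    ¬ ∃ (p : C.InfPath) (r0 : R), p.states 0 = a ∧
        ∀ B : ℝ, ∃ N : ℕ, B < ∑ i ∈ Finset.range N, p.flux i r0 := by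
  classical
  rintro ⟨p, r0, hpa, hdiv⟩
  obtain ⟨T, hT0, hbT⟩ := reach_total_flux C hab
  -- staticity: every reaction has a reactant species that is ≤ 0 in b
  have hstat : ∀ r : R, ∃ s, 0 < C.reactants r s ∧ b s ≤ 0 := by
    intro r
    by_contra h
    push_neg at h
    have happ : C.Applicable (fun r' => if r' = r then 1 else 0) b := by
      constructor
      · intro r'; by_cases hr : r' = r <;> simp [hr]
      · intro r' hr' s hs
        by_cases hr : r' = r
        · subst hr; exact h s hs
        · simp [hr] at hr'
    have := congrFun (hb _ happ) r
    simp at this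
  -- state formula
  have hstates : ∀ N s, p.states N s
      = a s + ∑ r, (∑ i ∈ Finset.range N, p.flux i r) * C.net r s := by
    intro N
    induction N with
    | zero => intro s; simp [hpa]
    | succ N ih =>
      intro s
      rw [(p.valid N).2.2 s, ih s]
      have : ∑ r, (∑ i ∈ Finset.range (N + 1), p.flux i r) * C.net r s
          = ∑ r, ((∑ i ∈ Finset.range N, p.flux i r) * C.net r s
              + p.flux N r * C.net r s) := by
        apply Finset.sum_congr rfl; intro r _; rw [Finset.sum_range_succ, add_mul]
      rw [this, Finset.sum_add_distrib]; ring
  -- main bound: cumulative flux is bounded by T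
  have hbound : ∀ N r, (∑ i ∈ Finset.range N, p.flux i r) ≤ T r := by
    intro N
    induction N with
    | zero => intro r; simpa using hT0 r
    | succ N ih =>
      by_contra hcon
      push_neg at hcon
      obtain ⟨r1, hr1⟩ := hcon
      set c : R → ℝ := fun r => ∑ i ∈ Finset.range N, p.flux i r with hcdef
      set w : R → ℝ := p.flux N with hwdef
      have hsum_succ : ∀ r, (∑ i ∈ Finset.range (N + 1), p.flux i r) = c r + w r := by
        intro r; rw [Finset.sum_range_succ]
      have hE : (Finset.univ.filter (fun r => T r < c r + w r)).Nonempty := by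
        refine ⟨r1, ?_⟩
        simp only [Finset.mem_filter, Finset.mem_univ, true_and]
        rw [← hsum_succ]; exact hr1
      obtain ⟨r, hrE, hrmin⟩ :=
        Finset.exists_min_image _ (fun r => (T r - c r) / w r) hE
      simp only [Finset.mem_filter, Finset.mem_univ, true_and] at hrE
      have hwnn : ∀ r', 0 ≤ w r' := (p.valid N).1.1
      have hcT : ∀ r', c r' ≤ T r' := ih
      have hwr : 0 < w r := by
        rcases (hwnn r).lt_or_eq with h | h
        · exact h
        · exfalso; rw [← h] at hrE; simp at hrE; exact absurd hrE (not_lt.2 (hcT r))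
      set θ : ℝ := (T r - c r) / w r with hθdef
      have hθ0 : 0 ≤ θ := div_nonneg (by linarith [hcT r]) hwr.le
      have hθ1 : θ < 1 := (div_lt_one hwr).2 (by linarith [hrE])
      have hre : c r + θ * w r = T r := by
        rw [hθdef, div_mul_cancel₀ _ hwr.ne']; ring
      have hkey : ∀ r', c r' + θ * w r' ≤ T r' := by
        intro r'
        by_cases h : T r' < c r' + w r'
        · have hwr' : 0 < w r' := by
            rcases (hwnn r').lt_or_eq with h' | h'
            · exact h'
            · exfalso; rw [← h'] at h; exact absurd h (not_lt.2 (by simpa using hcT r'))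
          have hmin := hrmin r' (by
            simp only [Finset.mem_filter, Finset.mem_univ, true_and]; exact h)
          have : θ * w r' ≤ T r' - c r' := (le_div_iff₀ hwr').mp hmin
          linarith
        · push_neg at h
          nlinarith [hwnn r', mul_nonneg (sub_nonneg.2 hθ1.le) (hwnn r')]
      obtain ⟨s, hs1, hs2⟩ := hstat r
      have hxpos : 0 < p.states N s := (p.valid N).1.2 r hwr s hs1
      have hynn : 0 ≤ p.states (N + 1) s := (p.valid N).2.1 s
      have hnet : ∀ r', r' ≠ r → 0 ≤ C.net r' s := by
        intro r' hne
        by_contra hneg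
        push_neg at hneg
        have hlt : C.products r' s < C.reactants r' s := by
          have : (C.products r' s : ℝ) < (C.reactants r' s : ℝ) := by
            unfold CRN.net at hneg; linarith
          exact_mod_cast this
        exact hne (hnc r' s hlt r hs1).symm
      -- the intermediate point z is ≤ 0 at s
      have hz : a s + ∑ r', (c r' + θ * w r') * C.net r' s ≤ 0 := by
        have hsum : ∑ r', ((c r' + θ * w r') - T r') * C.net r' s ≤ 0 := by
          apply Finset.sum_nonpos
          intro r' _
          by_cases h : r' = r
          · subst h; rw [hre]; simp
          · exact mul_nonpos_of_nonpos_of_nonneg (by linarith [hkey r']) (hnet r' h)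
        have hsplit : ∑ r', ((c r' + θ * w r') - T r') * C.net r' s
            = (∑ r', (c r' + θ * w r') * C.net r' s) - ∑ r', T r' * C.net r' s := by
          rw [← Finset.sum_sub_distrib]
          apply Finset.sum_congr rfl; intro r' _; ring
        have hbs := hbT s
        rw [hsplit] at hsum
        linarith
      -- but z = (1-θ) x + θ y with x > 0, y ≥ 0, θ ∈ [0,1)
      have hx := hstates N s
      have hstep := (p.valid N).2.2 s
      have hzx : a s + ∑ r', (c r' + θ * w r') * C.net r' s
          = p.states N s + θ * ∑ r', w r' * C.net r' s := by
        rw [hx, Finset.mul_sum]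
        have : ∑ r', (c r' + θ * w r') * C.net r' s
            = ∑ r', (c r' * C.net r' s + θ * (w r' * C.net r' s)) := by
          apply Finset.sum_congr rfl; intro r' _; ring
        rw [this, Finset.sum_add_distrib]; ring
      rw [hzx] at hz
      nlinarith [mul_pos (show (0:ℝ) < 1 - θ by linarith) hxpos,
        mul_nonneg hθ0 hynn]
  obtain ⟨Nd, hNd⟩ := hdiv (T r0)
  exact absurd hNd (not_lt.2 (hbound Nd r0))
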